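/- Let R⁺ = ℚ[a0, a1, b0, b1]/J⁺ with J⁺ as in Theorem coho2n, and R⁻ = ℚ[a0, a1, b0]/J⁻ with J⁻ as in Theorem coho3n. Then R⁺ and R⁻ are not isomorphic as ℚ-algebras. -/

import Mathlib

set_option maxHeartbeats 1000000
set_option synthInstance.maxHeartbeats 400000

open MvPolynomial

noncomputable def pa0 : MvPolynomial (Fin 4) ℚ := X 0
noncomputable def pa1 : MvPolynomial (Fin 4) ℚ := X 1
noncomputable def pb0 : MvPolynomial (Fin 4) ℚ := X 2
noncomputable def pb1 : MvPolynomial (Fin 4) ℚ := X 3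

noncomputable def Jplus : Ideal (MvPolynomial (Fin 4) ℚ) :=
  Ideal.span {pa1 * pb1, pb0 * pb1, pa0 * pa1 - pb0 * pa1, pa0 * pa1 + 8 * pa1 ^ 2,
    pa0 * pb1 + 24 * pb1 ^ 2, 4 * pb0 ^ 2 + 8 * pa1 * pb0 - 3 * pa0 * pb0,
    pa0 ^ 2 * pa1, pa0 ^ 2 * pb0, 3 * pa0 ^ 3 + 22 * pa0 ^ 2 * pb1}

noncomputable def ma0 : MvPolynomial (Fin 3) ℚ := X 0
noncomputable def ma1 : MvPolynomial (Fin 3) ℚ := X 1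
noncomputable def mb0 : MvPolynomial (Fin 3) ℚ := X 2

noncomputable def Jminus : Ideal (MvPolynomial (Fin 3) ℚ) :=
  Ideal.span {3 * mb0 ^ 2 + 6 * ma1 * mb0 - ma0 * mb0, 2 * ma1 * mb0 - ma1 * ma0,
    12 * ma1 ^ 2 + ma1 * ma0, ma0 ^ 2 * mb0, 3 * ma0 ^ 3 + 32 * ma1 * ma0 ^ 2}

/-! ## A 10-dimensional commutative model algebra for `R⁺` -/

@[ext]
structure RP where
  x0 : ℚ
  x1 : ℚ
  x2 : ℚ
  x3 : ℚ
  x4 : ℚ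
  x5 : ℚ
  x6 : ℚ
  x7 : ℚ
  x8 : ℚ
  x9 : ℚ

namespace RP

instance : Zero RP := ⟨⟨0, 0, 0, 0, 0, 0, 0, 0, 0, 0⟩⟩
instance : One RP := ⟨⟨1, 0, 0, 0, 0, 0, 0, 0, 0, 0⟩⟩
instance : Add RP := ⟨fun a b => ⟨a.x0 + b.x0, a.x1 + b.x1, a.x2 + b.x2, a.x3 + b.x3, a.x4 + b.x4, a.x5 + b.x5, a.x6 + b.x6, a.x7 + b.x7, a.x8 + b.x8, a.x9 + b.x9⟩⟩
instance : Neg RP := ⟨fun a => ⟨-a.x0, -a.x1, -a.x2, -a.x3, -a.x4, -a.x5, -a.x6, -a.x7, -a.x8, -a.x9⟩⟩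
instance : SMul ℚ RP := ⟨fun q a => ⟨q * a.x0, q * a.x1, q * a.x2, q * a.x3, q * a.x4, q * a.x5, q * a.x6, q * a.x7, q * a.x8, q * a.x9⟩⟩
instance : Mul RP := ⟨fun a b => ⟨a.x0 * b.x0, a.x0 * b.x1 + a.x1 * b.x0, a.x0 * b.x2 + a.x2 * b.x0, a.x0 * b.x3 + a.x3 * b.x0, a.x0 * b.x4 + a.x4 * b.x0, a.x0 * b.x5 + a.x5 * b.x0 - (1/24) * (a.x1 * b.x1) + a.x1 * b.x4 + a.x4 * b.x1, a.x0 * b.x6 + a.x6 * b.x0 + (3/4) * (a.x2 * b.x2) + a.x2 * b.x4 + a.x4 * b.x2, a.x0 * b.x7 + a.x7 * b.x0 - 2 * (a.x2 * b.x2) + a.x2 * b.x3 + a.x3 * b.x2 - (1/8) * (a.x3 * b.x3) + a.x3 * b.x4 + a.x4 * b.x3, a.x0 * b.x8 + a.x8 * b.x0 + a.x4 * b.x4, a.x0 * b.x9 + a.x9 * b.x0 + (1/176) * (a.x1 * b.x5 + a.x5 * b.x1) - (3/22) * (a.x1 * b.x8 + a.x8 * b.x1) - (3/22) * (a.x4 *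 b.x5 + a.x5 * b.x4) + a.x4 * b.x8 + a.x8 * b.x4⟩⟩

@[simp] theorem zero_x0 : (0 : RP).x0 = 0 := rfl
@[simp] theorem zero_x1 : (0 : RP).x1 = 0 := rfl
@[simp] theorem zero_x2 : (0 : RP).x2 = 0 := rfl
@[simp] theorem zero_x3 : (0 : RP).x3 = 0 := rfl
@[simp] theorem zero_x4 : (0 : RP).x4 = 0 := rfl
@[simp] theorem zero_x5 : (0 : RP).x5 = 0 := rfl
@[simp] theorem zero_x6 : (0 : RP).x6 = 0 := rfl
@[simp] theorem zero_x7 : (0 : RP).x7 = 0 := rfl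
@[simp] theorem zero_x8 : (0 : RP).x8 = 0 := rfl
@[simp] theorem zero_x9 : (0 : RP).x9 = 0 := rfl
@[simp] theorem one_x0 : (1 : RP).x0 = 1 := rfl
@[simp] theorem one_x1 : (1 : RP).x1 = 0 := rfl
@[simp] theorem one_x2 : (1 : RP).x2 = 0 := rfl
@[simp] theorem one_x3 : (1 : RP).x3 = 0 := rfl
@[simp] theorem one_x4 : (1 : RP).x4 = 0 := rfl
@[simp] theorem one_x5 : (1 : RP).x5 = 0 := rfl
@[simp] theorem one_x6 : (1 : RP).x6 = 0 := rfl
@[simp] theorem one_x7 : (1 : RP).x7 = 0 := rfl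
@[simp] theorem one_x8 : (1 : RP).x8 = 0 := rfl
@[simp] theorem one_x9 : (1 : RP).x9 = 0 := rfl
@[simp] theorem add_x0 (a b : RP) : (a + b).x0 = a.x0 + b.x0 := rfl
@[simp] theorem add_x1 (a b : RP) : (a + b).x1 = a.x1 + b.x1 := rfl
@[simp] theorem add_x2 (a b : RP) : (a + b).x2 = a.x2 + b.x2 := rfl
@[simp] theorem add_x3 (a b : RP) : (a + b).x3 = a.x3 + b.x3 := rfl
@[simp] theorem add_x4 (a b : RP) : (a + b).x4 = a.x4 + b.x4 := rfl
@[simp] theorem add_x5 (a b : RP) : (a + b).x5 = a.x5 + b.x5 := rfl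
@[simp] theorem add_x6 (a b : RP) : (a + b).x6 = a.x6 + b.x6 := rfl
@[simp] theorem add_x7 (a b : RP) : (a + b).x7 = a.x7 + b.x7 := rfl
@[simp] theorem add_x8 (a b : RP) : (a + b).x8 = a.x8 + b.x8 := rfl
@[simp] theorem add_x9 (a b : RP) : (a + b).x9 = a.x9 + b.x9 := rfl
@[simp] theorem neg_x0 (a : RP) : (-a).x0 = -a.x0 := rfl
@[simp] theorem neg_x1 (a : RP) : (-a).x1 = -a.x1 := rfl
@[simp] theorem neg_x2 (a : RP) : (-a).x2 = -a.x2 := rfl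
@[simp] theorem neg_x3 (a : RP) : (-a).x3 = -a.x3 := rfl
@[simp] theorem neg_x4 (a : RP) : (-a).x4 = -a.x4 := rfl
@[simp] theorem neg_x5 (a : RP) : (-a).x5 = -a.x5 := rfl
@[simp] theorem neg_x6 (a : RP) : (-a).x6 = -a.x6 := rfl
@[simp] theorem neg_x7 (a : RP) : (-a).x7 = -a.x7 := rfl
@[simp] theorem neg_x8 (a : RP) : (-a).x8 = -a.x8 := rfl
@[simp] theorem neg_x9 (a : RP) : (-a).x9 = -a.x9 := rfl
@[simp] theorem smul_x0 (q : ℚ) (a : RP) : (q • a).x0 = q * a.x0 := rfl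
@[simp] theorem smul_x1 (q : ℚ) (a : RP) : (q • a).x1 = q * a.x1 := rfl
@[simp] theorem smul_x2 (q : ℚ) (a : RP) : (q • a).x2 = q * a.x2 := rfl
@[simp] theorem smul_x3 (q : ℚ) (a : RP) : (q • a).x3 = q * a.x3 := rfl
@[simp] theorem smul_x4 (q : ℚ) (a : RP) : (q • a).x4 = q * a.x4 := rfl
@[simp] theorem smul_x5 (q : ℚ) (a : RP) : (q • a).x5 = q * a.x5 := rfl
@[simp] theorem smul_x6 (q : ℚ) (a : RP) : (q • a).x6 = q * a.x6 := rfl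
@[simp] theorem smul_x7 (q : ℚ) (a : RP) : (q • a).x7 = q * a.x7 := rfl
@[simp] theorem smul_x8 (q : ℚ) (a : RP) : (q • a).x8 = q * a.x8 := rfl
@[simp] theorem smul_x9 (q : ℚ) (a : RP) : (q • a).x9 = q * a.x9 := rfl
@[simp] theorem mul_x0 (a b : RP) : (a * b).x0 = a.x0 * b.x0 := rfl
@[simp] theorem mul_x1 (a b : RP) : (a * b).x1 = a.x0 * b.x1 + a.x1 * b.x0 := rfl
@[simp] theorem mul_x2 (a b : RP) : (a * b).x2 = a.x0 * b.x2 + a.x2 * b.x0 := rfl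
@[simp] theorem mul_x3 (a b : RP) : (a * b).x3 = a.x0 * b.x3 + a.x3 * b.x0 := rfl
@[simp] theorem mul_x4 (a b : RP) : (a * b).x4 = a.x0 * b.x4 + a.x4 * b.x0 := rfl
@[simp] theorem mul_x5 (a b : RP) : (a * b).x5 = a.x0 * b.x5 + a.x5 * b.x0 - (1/24) * (a.x1 * b.x1) + a.x1 * b.x4 + a.x4 * b.x1 := rfl
@[simp] theorem mul_x6 (a b : RP) : (a * b).x6 = a.x0 * b.x6 + a.x6 * b.x0 + (3/4) * (a.x2 * b.x2) + a.x2 * b.x4 + a.x4 * b.x2 := rfl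
@[simp] theorem mul_x7 (a b : RP) : (a * b).x7 = a.x0 * b.x7 + a.x7 * b.x0 - 2 * (a.x2 * b.x2) + a.x2 * b.x3 + a.x3 * b.x2 - (1/8) * (a.x3 * b.x3) + a.x3 * b.x4 + a.x4 * b.x3 := rfl
@[simp] theorem mul_x8 (a b : RP) : (a * b).x8 = a.x0 * b.x8 + a.x8 * b.x0 + a.x4 * b.x4 := rfl
@[simp] theorem mul_x9 (a b : RP) : (a * b).x9 = a.x0 * b.x9 + a.x9 * b.x0 + (1/176) * (a.x1 * b.x5 + a.x5 * b.x1) - (3/22) * (a.x1 * b.x8 + a.x8 * b.x1) - (3/22) * (a.x4 * b.x5 + a.x5 * b.x4) + a.x4 * b.x8 + a.x8 * b.x4 := rfl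

protected theorem add_assoc' (a b c : RP) : a + b + c = a + (b + c) := by ext <;> simp <;> ring
protected theorem zero_add' (a : RP) : 0 + a = a := by ext <;> simp
protected theorem add_zero' (a : RP) : a + 0 = a := by ext <;> simp
protected theorem add_comm' (a b : RP) : a + b = b + a := by ext <;> simp <;> ring
protected theorem neg_add_cancel' (a : RP) : -a + a = 0 := by ext <;> simp
protected theorem mul_assoc' (a b c : RP) : a * b * c = a * (b * c) := by ext <;> simp <;> ring
protected theorem one_mul' (a : RP) : 1 * a = a := by ext <;> simp
protected theorem mul_one' (a : RP) : a * 1 = a := by ext <;> simp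
protected theorem left_distrib' (a b c : RP) : a * (b + c) = a * b + a * c := by
  ext <;> simp <;> ring
protected theorem right_distrib' (a b c : RP) : (a + b) * c = a * c + b * c := by
  ext <;> simp <;> ring
protected theorem zero_mul' (a : RP) : 0 * a = 0 := by ext <;> simp
protected theorem mul_zero' (a : RP) : a * 0 = 0 := by ext <;> simp
protected theorem mul_comm' (a b : RP) : a * b = b * a := by ext <;> simp <;> ring

def natC (n : ℕ) : RP := ⟨(n : ℚ), 0, 0, 0, 0, 0, 0, 0, 0, 0⟩
def intC (z : ℤ) : RP := ⟨(z : ℚ), 0, 0, 0, 0, 0, 0, 0, 0, 0⟩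

instance instCommRing : CommRing RP where
  add := (· + ·)
  add_assoc := RP.add_assoc'
  zero := 0
  zero_add := RP.zero_add'
  add_zero := RP.add_zero'
  add_comm := RP.add_comm'
  neg := Neg.neg
  neg_add_cancel := RP.neg_add_cancel'
  mul := (· * ·)
  mul_assoc := RP.mul_assoc'
  one := 1
  one_mul := RP.one_mul'
  mul_one := RP.mul_one'
  left_distrib := RP.left_distrib'
  right_distrib := RP.right_distrib'
  zero_mul := RP.zero_mul'
  mul_zero := RP.mul_zero'
  mul_comm := RP.mul_comm'
  nsmul n a := (n : ℚ) • a
  nsmul_zero a := by ext <;> (show ((0:ℕ):ℚ) * _ = _; simp)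
  nsmul_succ n a := by ext <;> (show ((n+1:ℕ):ℚ) * _ = ((n:ℕ):ℚ) * _ + _; push_cast; ring)
  zsmul z a := (z : ℚ) • a
  zsmul_zero' a := by ext <;> (show ((0:ℤ):ℚ) * _ = _; simp)
  zsmul_succ' n a := by ext <;> (show (((n.succ:ℕ):ℤ):ℚ) * _ = (((n:ℕ):ℤ):ℚ) * _ + _; push_cast; ring)
  zsmul_neg' n a := by ext <;> (show ((Int.negSucc n:ℤ):ℚ) * _ = -((((n.succ:ℕ):ℤ):ℚ) * _); rw [Int.cast_negSucc]; push_cast; ring)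
  natCast := natC
  natCast_zero := by show natC _ = 0; ext <;> simp [natC]
  natCast_succ n := by show natC _ = natC _ + 1; ext <;> simp [natC] <;> push_cast <;> ring
  intCast := intC
  intCast_ofNat n := by
    show intC _ = natC _
    ext <;> simp [natC, intC]
  intCast_negSucc n := by
    show intC _ = -(natC _)
    ext <;> simp [natC, intC, Int.cast_negSucc] <;> push_cast <;> ring

@[simp] theorem natCast_x0 (n : ℕ) : ((n : ℕ) : RP).x0 = (n : ℚ) := rfl
@[simp] theorem natCast_x1 (n : ℕ) : ((n : ℕ) : RP).x1 = 0 := rfl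
@[simp] theorem natCast_x2 (n : ℕ) : ((n : ℕ) : RP).x2 = 0 := rfl
@[simp] theorem natCast_x3 (n : ℕ) : ((n : ℕ) : RP).x3 = 0 := rfl
@[simp] theorem natCast_x4 (n : ℕ) : ((n : ℕ) : RP).x4 = 0 := rfl
@[simp] theorem natCast_x5 (n : ℕ) : ((n : ℕ) : RP).x5 = 0 := rfl
@[simp] theorem natCast_x6 (n : ℕ) : ((n : ℕ) : RP).x6 = 0 := rfl
@[simp] theorem natCast_x7 (n : ℕ) : ((n : ℕ) : RP).x7 = 0 := rfl
@[simp] theorem natCast_x8 (n : ℕ) : ((n : ℕ) : RP).x8 = 0 := rfl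
@[simp] theorem natCast_x9 (n : ℕ) : ((n : ℕ) : RP).x9 = 0 := rfl
@[simp] theorem ofNat_x0 (n : ℕ) [n.AtLeastTwo] :
    (no_index (OfNat.ofNat n) : RP).x0 = OfNat.ofNat n := by
  rw [← Nat.cast_ofNat (R := RP), natCast_x0, Nat.cast_ofNat]
@[simp] theorem ofNat_x1 (n : ℕ) [n.AtLeastTwo] :
    (no_index (OfNat.ofNat n) : RP).x1 = 0 := by
  rw [← Nat.cast_ofNat (R := RP), natCast_x1]
@[simp] theorem ofNat_x2 (n : ℕ) [n.AtLeastTwo] :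
    (no_index (OfNat.ofNat n) : RP).x2 = 0 := by
  rw [← Nat.cast_ofNat (R := RP), natCast_x2]
@[simp] theorem ofNat_x3 (n : ℕ) [n.AtLeastTwo] :
    (no_index (OfNat.ofNat n) : RP).x3 = 0 := by
  rw [← Nat.cast_ofNat (R := RP), natCast_x3]
@[simp] theorem ofNat_x4 (n : ℕ) [n.AtLeastTwo] :
    (no_index (OfNat.ofNat n) : RP).x4 = 0 := by
  rw [← Nat.cast_ofNat (R := RP), natCast_x4]
@[simp] theorem ofNat_x5 (n : ℕ) [n.AtLeastTwo] :
    (no_index (OfNat.ofNat n) : RP).x5 = 0 := by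
  rw [← Nat.cast_ofNat (R := RP), natCast_x5]
@[simp] theorem ofNat_x6 (n : ℕ) [n.AtLeastTwo] :
    (no_index (OfNat.ofNat n) : RP).x6 = 0 := by
  rw [← Nat.cast_ofNat (R := RP), natCast_x6]
@[simp] theorem ofNat_x7 (n : ℕ) [n.AtLeastTwo] :
    (no_index (OfNat.ofNat n) : RP).x7 = 0 := by
  rw [← Nat.cast_ofNat (R := RP), natCast_x7]
@[simp] theorem ofNat_x8 (n : ℕ) [n.AtLeastTwo] :
    (no_index (OfNat.ofNat n) : RP).x8 = 0 := by
  rw [← Nat.cast_ofNat (R := RP), natCast_x8]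
@[simp] theorem ofNat_x9 (n : ℕ) [n.AtLeastTwo] :
    (no_index (OfNat.ofNat n) : RP).x9 = 0 := by
  rw [← Nat.cast_ofNat (R := RP), natCast_x9]

@[simp] theorem sub_x0 (a b : RP) : (a - b).x0 = a.x0 - b.x0 := by
  rw [sub_eq_add_neg, add_x0, neg_x0, ← sub_eq_add_neg]
@[simp] theorem sub_x1 (a b : RP) : (a - b).x1 = a.x1 - b.x1 := by
  rw [sub_eq_add_neg, add_x1, neg_x1, ← sub_eq_add_neg]
@[simp] theorem sub_x2 (a b : RP) : (a - b).x2 = a.x2 - b.x2 := by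
  rw [sub_eq_add_neg, add_x2, neg_x2, ← sub_eq_add_neg]
@[simp] theorem sub_x3 (a b : RP) : (a - b).x3 = a.x3 - b.x3 := by
  rw [sub_eq_add_neg, add_x3, neg_x3, ← sub_eq_add_neg]
@[simp] theorem sub_x4 (a b : RP) : (a - b).x4 = a.x4 - b.x4 := by
  rw [sub_eq_add_neg, add_x4, neg_x4, ← sub_eq_add_neg]
@[simp] theorem sub_x5 (a b : RP) : (a - b).x5 = a.x5 - b.x5 := by
  rw [sub_eq_add_neg, add_x5, neg_x5, ← sub_eq_add_neg]
@[simp] theorem sub_x6 (a b : RP) : (a - b).x6 = a.x6 - b.x6 := by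
  rw [sub_eq_add_neg, add_x6, neg_x6, ← sub_eq_add_neg]
@[simp] theorem sub_x7 (a b : RP) : (a - b).x7 = a.x7 - b.x7 := by
  rw [sub_eq_add_neg, add_x7, neg_x7, ← sub_eq_add_neg]
@[simp] theorem sub_x8 (a b : RP) : (a - b).x8 = a.x8 - b.x8 := by
  rw [sub_eq_add_neg, add_x8, neg_x8, ← sub_eq_add_neg]
@[simp] theorem sub_x9 (a b : RP) : (a - b).x9 = a.x9 - b.x9 := by
  rw [sub_eq_add_neg, add_x9, neg_x9, ← sub_eq_add_neg]

noncomputable def aMap : ℚ →+* RP where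
  toFun q := ⟨q, 0, 0, 0, 0, 0, 0, 0, 0, 0⟩
  map_one' := by ext <;> simp
  map_mul' x y := by ext <;> simp
  map_zero' := by ext <;> simp
  map_add' x y := by ext <;> simp

@[simp] theorem aMap_x0 (q : ℚ) : (aMap q).x0 = q := rfl
@[simp] theorem aMap_x1 (q : ℚ) : (aMap q).x1 = 0 := rfl
@[simp] theorem aMap_x2 (q : ℚ) : (aMap q).x2 = 0 := rfl
@[simp] theorem aMap_x3 (q : ℚ) : (aMap q).x3 = 0 := rfl
@[simp] theorem aMap_x4 (q : ℚ) : (aMap q).x4 = 0 := rfl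
@[simp] theorem aMap_x5 (q : ℚ) : (aMap q).x5 = 0 := rfl
@[simp] theorem aMap_x6 (q : ℚ) : (aMap q).x6 = 0 := rfl
@[simp] theorem aMap_x7 (q : ℚ) : (aMap q).x7 = 0 := rfl
@[simp] theorem aMap_x8 (q : ℚ) : (aMap q).x8 = 0 := rfl
@[simp] theorem aMap_x9 (q : ℚ) : (aMap q).x9 = 0 := rfl

noncomputable instance instAlgebra : Algebra ℚ RP where
  smul := (· • ·)
  algebraMap := aMap
  commutes' q a := by ext <;> simp <;> ring
  smul_def' q a := by ext <;> simp <;> ring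

end RP

/-! ## The algebra map from the polynomial ring, killing `Jplus` -/

noncomputable def eA0 : RP := ⟨0, 0, 0, 0, 1, 0, 0, 0, 0, 0⟩
noncomputable def eA1 : RP := ⟨0, 0, 0, 1, 0, 0, 0, 0, 0, 0⟩
noncomputable def eB0 : RP := ⟨0, 0, 1, 0, 0, 0, 0, 0, 0, 0⟩
noncomputable def eB1 : RP := ⟨0, 1, 0, 0, 0, 0, 0, 0, 0, 0⟩

noncomputable def phi : MvPolynomial (Fin 4) ℚ →ₐ[ℚ] RP :=
  aeval ![eA0, eA1, eB0, eB1]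

theorem phi_a0 : phi pa0 = eA0 := by simp [phi, pa0, aeval_X]
theorem phi_a1 : phi pa1 = eA1 := by simp [phi, pa1, aeval_X]
theorem phi_b0 : phi pb0 = eB0 := by simp [phi, pb0, aeval_X]
theorem phi_b1 : phi pb1 = eB1 := by simp [phi, pb1, aeval_X]

theorem phiv_one : phi 1 = (⟨1, 0, 0, 0, 0, 0, 0, 0, 0, 0⟩ : RP) := by
  rw [map_one]; rfl

theorem phiv_vb1 : phi pb1 = (⟨0, 1, 0, 0, 0, 0, 0, 0, 0, 0⟩ : RP) := by
  rw [phi_b1]; rfl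

theorem phiv_vb0 : phi pb0 = (⟨0, 0, 1, 0, 0, 0, 0, 0, 0, 0⟩ : RP) := by
  rw [phi_b0]; rfl

theorem phiv_va1 : phi pa1 = (⟨0, 0, 0, 1, 0, 0, 0, 0, 0, 0⟩ : RP) := by
  rw [phi_a1]; rfl

theorem phiv_va0 : phi pa0 = (⟨0, 0, 0, 0, 1, 0, 0, 0, 0, 0⟩ : RP) := by
  rw [phi_a0]; rfl

theorem phiv_vab1 : phi (pa0 * pb1) = (⟨0, 0, 0, 0, 0, 1, 0, 0, 0, 0⟩ : RP) := by
  rw [map_mul, phi_a0, phi_b1]; ext <;> simp [eA0, eB1]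

theorem phiv_vab0 : phi (pa0 * pb0) = (⟨0, 0, 0, 0, 0, 0, 1, 0, 0, 0⟩ : RP) := by
  rw [map_mul, phi_a0, phi_b0]; ext <;> simp [eA0, eB0]

theorem phiv_vaa1 : phi (pa0 * pa1) = (⟨0, 0, 0, 0, 0, 0, 0, 1, 0, 0⟩ : RP) := by
  rw [map_mul, phi_a0, phi_a1]; ext <;> simp [eA0, eA1]

theorem phiv_va2 : phi (pa0 ^ 2) = (⟨0, 0, 0, 0, 0, 0, 0, 0, 1, 0⟩ : RP) := by
  rw [map_pow, phi_a0, pow_two]; ext <;> simp [eA0]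

theorem phiv_va3 : phi (pa0 ^ 3) = (⟨0, 0, 0, 0, 0, 0, 0, 0, 0, 1⟩ : RP) := by
  rw [map_pow, phi_a0, pow_succ, pow_two]; ext <;> simp [eA0]

theorem phiz_g1 : phi (pa1 * pb1) = 0 := by
  rw [map_mul, phi_a1, phi_b1]; ext <;> simp [eA1, eB1]

theorem phiz_g2 : phi (pb0 * pb1) = 0 := by
  rw [map_mul, phi_b0, phi_b1]; ext <;> simp [eB0, eB1]

theorem phiz_g3 : phi (pa0 * pa1 - pb0 * pa1) = 0 := by
  rw [map_sub, map_mul, map_mul, phi_a0, phi_a1, phi_b0]; ext <;> simp [eA0, eA1, eB0]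

theorem phiz_g4 : phi (pa0 * pa1 + 8 * pa1 ^ 2) = 0 := by
  simp only [map_add, map_mul, map_pow, map_ofNat, phi_a0, phi_a1]; ext <;> simp [eA0, eA1, pow_two] <;> norm_num

theorem phiz_g5 : phi (pa0 * pb1 + 24 * pb1 ^ 2) = 0 := by
  simp only [map_add, map_mul, map_pow, map_ofNat, phi_a0, phi_b1]; ext <;> simp [eA0, eB1, pow_two] <;> norm_num

theorem phiz_g6 : phi (4 * pb0 ^ 2 + 8 * pa1 * pb0 - 3 * pa0 * pb0) = 0 := by
  simp only [map_add, map_sub, map_mul, map_pow, map_ofNat, phi_a0, phi_a1, phi_b0]; ext <;> simp [eA0, eA1, eB0, pow_two] <;> norm_num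

theorem phiz_g7 : phi (pa0 ^ 2 * pa1) = 0 := by
  simp only [map_mul, map_pow, phi_a0, phi_a1]; ext <;> simp [eA0, eA1, pow_two] <;> norm_num

theorem phiz_g8 : phi (pa0 ^ 2 * pb0) = 0 := by
  simp only [map_mul, map_pow, phi_a0, phi_b0]; ext <;> simp [eA0, eB0, pow_two] <;> norm_num

theorem phiz_g9 : phi (3 * pa0 ^ 3 + 22 * pa0 ^ 2 * pb1) = 0 := by
  simp only [map_add, map_mul, map_pow, map_ofNat, phi_a0, phi_b1]; ext <;> simp [eA0, eB1, pow_succ, pow_two] <;> norm_num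

theorem phi_ker : ∀ a ∈ Jplus, phi a = 0 := by
  intro a ha
  have h2 : a ∈ RingHom.ker phi.toRingHom := by
    refine Ideal.span_le.mpr ?_ ha
    rintro g hg
    simp only [Set.mem_insert_iff, Set.mem_singleton_iff] at hg
    rcases hg with rfl | rfl | rfl | rfl | rfl | rfl | rfl | rfl | rfl
    · exact RingHom.mem_ker.mpr phiz_g1
    · exact RingHom.mem_ker.mpr phiz_g2
    · exact RingHom.mem_ker.mpr phiz_g3
    · exact RingHom.mem_ker.mpr phiz_g4
    · exact RingHom.mem_ker.mpr phiz_g5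
    · exact RingHom.mem_ker.mpr phiz_g6
    · exact RingHom.mem_ker.mpr phiz_g7
    · exact RingHom.mem_ker.mpr phiz_g8
    · exact RingHom.mem_ker.mpr phiz_g9
  exact RingHom.mem_ker.mp h2

noncomputable def phi' : (MvPolynomial (Fin 4) ℚ ⧸ Jplus) →ₐ[ℚ] RP :=
  Ideal.Quotient.liftₐ Jplus phi phi_ker

noncomputable def mkp : MvPolynomial (Fin 4) ℚ →ₐ[ℚ] (MvPolynomial (Fin 4) ℚ ⧸ Jplus) :=
  Ideal.Quotient.mkₐ ℚ Jplus

theorem phi'_mk (p : MvPolynomial (Fin 4) ℚ) : phi' (mkp p) = phi p := by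
  simp [phi', mkp, Ideal.Quotient.liftₐ_apply, Ideal.Quotient.mkₐ_eq_mk,
    Ideal.Quotient.lift_mk]
  exact Ideal.Quotient.lift_mk Jplus _ phi_ker

noncomputable def FF : Fin 10 → (MvPolynomial (Fin 4) ℚ ⧸ Jplus) :=
  ![mkp 1, mkp pb1, mkp pb0, mkp pa1, mkp pa0, mkp (pa0 * pb1), mkp (pa0 * pb0),
    mkp (pa0 * pa1), mkp (pa0 ^ 2), mkp (pa0 ^ 3)]

theorem FF0 : FF 0 = mkp 1 := rfl
theorem FF1 : FF 1 = mkp pb1 := rfl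
theorem FF2 : FF 2 = mkp pb0 := rfl
theorem FF3 : FF 3 = mkp pa1 := rfl
theorem FF4 : FF 4 = mkp pa0 := rfl
theorem FF5 : FF 5 = mkp (pa0 * pb1) := rfl
theorem FF6 : FF 6 = mkp (pa0 * pb0) := rfl
theorem FF7 : FF 7 = mkp (pa0 * pa1) := rfl
theorem FF8 : FF 8 = mkp (pa0 ^ 2) := rfl
theorem FF9 : FF 9 = mkp (pa0 ^ 3) := rfl

theorem sum_univ_ten' {β : Type*} [AddCommMonoid β] (f : Fin 10 → β) :
    ∑ i, f i = f 0 + f 1 + f 2 + f 3 + f 4 + f 5 + f 6 + f 7 + f 8 + f 9 := by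
  rw [Fin.sum_univ_castSucc, Fin.sum_univ_castSucc, Fin.sum_univ_eight]
  rfl

theorem indepW : LinearIndependent ℚ (fun j => phi' (FF j)) := by
  rw [Fintype.linearIndependent_iff]
  intro c hc
  rw [sum_univ_ten'] at hc
  simp only [FF0, FF1, FF2, FF3, FF4, FF5, FF6, FF7, FF8, FF9, phi'_mk,
    phiv_one, phiv_vb1, phiv_vb0, phiv_va1, phiv_va0, phiv_vab1, phiv_vab0,
    phiv_vaa1, phiv_va2, phiv_va3] at hc
  have h0 := congrArg RP.x0 hc
  have h1 := congrArg RP.x1 hc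
  have h2 := congrArg RP.x2 hc
  have h3 := congrArg RP.x3 hc
  have h4 := congrArg RP.x4 hc
  have h5 := congrArg RP.x5 hc
  have h6 := congrArg RP.x6 hc
  have h7 := congrArg RP.x7 hc
  have h8 := congrArg RP.x8 hc
  have h9 := congrArg RP.x9 hc
  simp only [RP.add_x0, RP.add_x1, RP.add_x2, RP.add_x3, RP.add_x4, RP.add_x5, RP.add_x6, RP.add_x7, RP.add_x8, RP.add_x9, RP.smul_x0, RP.smul_x1, RP.smul_x2, RP.smul_x3, RP.smul_x4, RP.smul_x5, RP.smul_x6, RP.smul_x7, RP.smul_x8, RP.smul_x9, RP.zero_x0, RP.zero_x1, RP.zero_x2, RP.zero_x3, RP.zero_x4, RP.zero_x5, RP.zero_x6, RP.zero_x7, RP.zero_x8, RP.zero_x9,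
    mul_one, mul_zero, add_zero, zero_add] at h0 h1 h2 h3 h4 h5 h6 h7 h8 h9
  intro j
  fin_cases j
  · exact h0
  · exact h1
  · exact h2
  · exact h3
  · exact h4
  · exact h5
  · exact h6
  · exact h7
  · exact h8
  · exact h9

theorem indepFF : LinearIndependent ℚ FF :=
  LinearIndependent.of_comp phi'.toLinearMap (by
    have h : (⇑phi'.toLinearMap ∘ FF) = fun j => phi' (FF j) := by
      funext j; simp [Function.comp, AlgHom.toLinearMap_apply]
    rw [h]
    exact indepW)

/-! ## The quotient `R⁻` is spanned by 8 elements -/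

noncomputable def mkm : MvPolynomial (Fin 3) ℚ →ₐ[ℚ] (MvPolynomial (Fin 3) ℚ ⧸ Jminus) :=
  Ideal.Quotient.mkₐ ℚ Jminus

noncomputable def GG : Fin 8 → (MvPolynomial (Fin 3) ℚ ⧸ Jminus) :=
  ![mkm 1, mkm mb0, mkm ma1, mkm ma0, mkm (ma0 * mb0), mkm (ma0 * ma1),
    mkm (ma0 ^ 2), mkm (ma0 ^ 3)]

noncomputable def SM : Submodule ℚ (MvPolynomial (Fin 3) ℚ ⧸ Jminus) :=
  Submodule.span ℚ (Set.range GG)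

theorem hGG0 : mkm 1 ∈ SM := Submodule.subset_span ⟨0, rfl⟩
theorem hGG1 : mkm mb0 ∈ SM := Submodule.subset_span ⟨1, rfl⟩
theorem hGG2 : mkm ma1 ∈ SM := Submodule.subset_span ⟨2, rfl⟩
theorem hGG3 : mkm ma0 ∈ SM := Submodule.subset_span ⟨3, rfl⟩
theorem hGG4 : mkm (ma0 * mb0) ∈ SM := Submodule.subset_span ⟨4, rfl⟩
theorem hGG5 : mkm (ma0 * ma1) ∈ SM := Submodule.subset_span ⟨5, rfl⟩
theorem hGG6 : mkm (ma0 ^ 2) ∈ SM := Submodule.subset_span ⟨6, rfl⟩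
theorem hGG7 : mkm (ma0 ^ 3) ∈ SM := Submodule.subset_span ⟨7, rfl⟩

theorem hJg0 : 3 * mb0 ^ 2 + 6 * ma1 * mb0 - ma0 * mb0 ∈ Jminus :=
  Ideal.subset_span (Set.mem_insert _ _)
theorem hJg1 : 2 * ma1 * mb0 - ma1 * ma0 ∈ Jminus :=
  Ideal.subset_span (Set.mem_insert_of_mem _ (Set.mem_insert _ _))
theorem hJg2 : 12 * ma1 ^ 2 + ma1 * ma0 ∈ Jminus :=
  Ideal.subset_span (Set.mem_insert_of_mem _ (Set.mem_insert_of_mem _ (Set.mem_insert _ _)))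
theorem hJg3 : ma0 ^ 2 * mb0 ∈ Jminus :=
  Ideal.subset_span (Set.mem_insert_of_mem _ (Set.mem_insert_of_mem _
    (Set.mem_insert_of_mem _ (Set.mem_insert _ _))))
theorem hJg4 : 3 * ma0 ^ 3 + 32 * ma1 * ma0 ^ 2 ∈ Jminus :=
  Ideal.subset_span (Set.mem_insert_of_mem _ (Set.mem_insert_of_mem _
    (Set.mem_insert_of_mem _ (Set.mem_insert_of_mem _ rfl))))

theorem keySM (N : ℕ) (hN : (N : ℚ) ≠ 0) (p B : MvPolynomial (Fin 3) ℚ)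
    (hmem : (N : MvPolynomial (Fin 3) ℚ) * p - B ∈ Jminus)
    (hB : mkm B ∈ SM) : mkm p ∈ SM := by
  have h2 : (N : ℚ) • p = (N : MvPolynomial (Fin 3) ℚ) * p := by
    rw [MvPolynomial.smul_eq_C_mul, map_natCast]
  have h3 := mkm.toLinearMap.map_smul (N : ℚ) p
  simp only [AlgHom.toLinearMap_apply] at h3
  have h1 : (N : ℚ) • mkm p = mkm B := by
    rw [← h3, h2]
    show Ideal.Quotient.mkₐ ℚ Jminus _ = Ideal.Quotient.mkₐ ℚ Jminus _
    rw [Ideal.Quotient.mkₐ_eq_mk]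
    exact Ideal.Quotient.eq.mpr hmem
  rw [← inv_smul_smul₀ hN (mkm p), h1]
  exact SM.smul_mem _ hB

theorem mkm_zero_mem : mkm 0 ∈ SM := by rw [map_zero]; exact SM.zero_mem

theorem ofnat_mul_mem (n : ℕ) {z : MvPolynomial (Fin 3) ℚ ⧸ Jminus} (hz : z ∈ SM) :
    (n : MvPolynomial (Fin 3) ℚ ⧸ Jminus) * z ∈ SM := by
  rw [← nsmul_eq_mul, ← Nat.cast_smul_eq_nsmul ℚ]
  exact SM.smul_mem _ hz

theorem mkm_nmul_mem (n : ℕ) (m : MvPolynomial (Fin 3) ℚ) (h : mkm m ∈ SM) :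
    mkm ((n : MvPolynomial (Fin 3) ℚ) * m) ∈ SM := by
  rw [map_mul, map_natCast]
  exact ofnat_mul_mem n h

theorem mkm_neg_nmul_mem (n : ℕ) (m : MvPolynomial (Fin 3) ℚ) (h : mkm m ∈ SM) :
    mkm (-((n : MvPolynomial (Fin 3) ℚ) * m)) ∈ SM := by
  rw [map_neg]
  exact SM.neg_mem (mkm_nmul_mem n m h)

theorem mkm_sub_mem (m₁ m₂ : MvPolynomial (Fin 3) ℚ) (h1 : mkm m₁ ∈ SM) (h2 : mkm m₂ ∈ SM) :
    mkm (m₁ - m₂) ∈ SM := by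
  rw [map_sub]
  exact SM.sub_mem h1 h2

theorem closed_ma0 : ∀ x ∈ SM, x * mkm ma0 ∈ SM := by
  intro x hx
  induction hx using Submodule.span_induction with
  | mem y hy =>
    obtain ⟨j, rfl⟩ := hy
    fin_cases j
    · show mkm 1 * mkm ma0 ∈ SM
      rw [← map_mul, one_mul]
      exact hGG3
    · show mkm (mb0) * mkm ma0 ∈ SM
      rw [← map_mul]
      rw [show (mb0 * ma0 : MvPolynomial (Fin 3) ℚ) = ma0 * mb0 from by ring]
      exact hGG4
    · show mkm (ma1) * mkm ma0 ∈ SM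
      rw [← map_mul]
      rw [show (ma1 * ma0 : MvPolynomial (Fin 3) ℚ) = ma0 * ma1 from by ring]
      exact hGG5
    · show mkm (ma0) * mkm ma0 ∈ SM
      rw [← map_mul]
      rw [show (ma0 * ma0 : MvPolynomial (Fin 3) ℚ) = ma0 ^ 2 from by ring]
      exact hGG6
    · show mkm (ma0 * mb0) * mkm ma0 ∈ SM
      rw [← map_mul]
      refine keySM 1 (by norm_num) (ma0 * mb0 * ma0) (0) ?_ ?_
      · rw [show ((1 : ℕ) : MvPolynomial (Fin 3) ℚ) * (ma0 * mb0 * ma0) - (0) = (1) * (ma0 ^ 2 * mb0) from by push_cast; ring]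
        exact Ideal.mul_mem_left _ (1) hJg3
      · exact mkm_zero_mem
    · show mkm (ma0 * ma1) * mkm ma0 ∈ SM
      rw [← map_mul]
      refine keySM 32 (by norm_num) (ma0 * ma1 * ma0) (-(((3 : ℕ) : MvPolynomial (Fin 3) ℚ) * (ma0 ^ 3))) ?_ ?_
      · rw [show ((32 : ℕ) : MvPolynomial (Fin 3) ℚ) * (ma0 * ma1 * ma0) - (-(((3 : ℕ) : MvPolynomial (Fin 3) ℚ) * (ma0 ^ 3))) = (1) * (3 * ma0 ^ 3 + 32 * ma1 * ma0 ^ 2) from by push_cast; ring]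
        exact Ideal.mul_mem_left _ (1) hJg4
      · exact mkm_neg_nmul_mem 3 (ma0 ^ 3) hGG7
    · show mkm (ma0 ^ 2) * mkm ma0 ∈ SM
      rw [← map_mul]
      rw [show (ma0 ^ 2 * ma0 : MvPolynomial (Fin 3) ℚ) = ma0 ^ 3 from by ring]
      exact hGG7
    · show mkm (ma0 ^ 3) * mkm ma0 ∈ SM
      rw [← map_mul]
      refine keySM 3 (by norm_num) (ma0 ^ 3 * ma0) (0) ?_ ?_
      · rw [show ((3 : ℕ) : MvPolynomial (Fin 3) ℚ) * (ma0 ^ 3 * ma0) - (0) = (ma0) * (3 * ma0 ^ 3 + 32 * ma1 * ma0 ^ 2) + (-(64 * ma1)) * (ma0 ^ 2 * mb0) + (32 * ma0 ^ 2) * (2 * ma1 * mb0 - ma1 * ma0) from by push_cast; ring]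
        exact Ideal.add_mem _ (Ideal.add_mem _ (Ideal.mul_mem_left _ (ma0) hJg4) (Ideal.mul_mem_left _ (-(64 * ma1)) hJg3)) (Ideal.mul_mem_left _ (32 * ma0 ^ 2) hJg1)
      · exact mkm_zero_mem
  | zero => rw [zero_mul]; exact SM.zero_mem
  | add a b ha hb iha ihb => rw [add_mul]; exact SM.add_mem iha ihb
  | smul a y hy ih => rw [smul_mul_assoc]; exact SM.smul_mem a ih

theorem closed_ma1 : ∀ x ∈ SM, x * mkm ma1 ∈ SM := by
  intro x hx
  induction hx using Submodule.span_induction with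
  | mem y hy =>
    obtain ⟨j, rfl⟩ := hy
    fin_cases j
    · show mkm 1 * mkm ma1 ∈ SM
      rw [← map_mul, one_mul]
      exact hGG2
    · show mkm (mb0) * mkm ma1 ∈ SM
      rw [← map_mul]
      refine keySM 2 (by norm_num) (mb0 * ma1) (ma0 * ma1) ?_ ?_
      · rw [show ((2 : ℕ) : MvPolynomial (Fin 3) ℚ) * (mb0 * ma1) - (ma0 * ma1) = (1) * (2 * ma1 * mb0 - ma1 * ma0) from by push_cast; ring]
        exact Ideal.mul_mem_left _ (1) hJg1
      · exact hGG5
    · show mkm (ma1) * mkm ma1 ∈ SM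
      rw [← map_mul]
      refine keySM 12 (by norm_num) (ma1 * ma1) (-(ma0 * ma1)) ?_ ?_
      · rw [show ((12 : ℕ) : MvPolynomial (Fin 3) ℚ) * (ma1 * ma1) - (-(ma0 * ma1)) = (1) * (12 * ma1 ^ 2 + ma1 * ma0) from by push_cast; ring]
        exact Ideal.mul_mem_left _ (1) hJg2
      · rw [map_neg]; exact SM.neg_mem hGG5
    · show mkm (ma0) * mkm ma1 ∈ SM
      rw [← map_mul]
      rw [show (ma0 * ma1 : MvPolynomial (Fin 3) ℚ) = ma0 * ma1 from by ring]
      exact hGG5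
    · show mkm (ma0 * mb0) * mkm ma1 ∈ SM
      rw [← map_mul]
      refine keySM 64 (by norm_num) (ma0 * mb0 * ma1) (-(((3 : ℕ) : MvPolynomial (Fin 3) ℚ) * (ma0 ^ 3))) ?_ ?_
      · rw [show ((64 : ℕ) : MvPolynomial (Fin 3) ℚ) * (ma0 * mb0 * ma1) - (-(((3 : ℕ) : MvPolynomial (Fin 3) ℚ) * (ma0 ^ 3))) = (32 * ma0) * (2 * ma1 * mb0 - ma1 * ma0) + (1) * (3 * ma0 ^ 3 + 32 * ma1 * ma0 ^ 2) from by push_cast; ring]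
        exact Ideal.add_mem _ (Ideal.mul_mem_left _ (32 * ma0) hJg1) (Ideal.mul_mem_left _ (1) hJg4)
      · exact mkm_neg_nmul_mem 3 (ma0 ^ 3) hGG7
    · show mkm (ma0 * ma1) * mkm ma1 ∈ SM
      rw [← map_mul]
      refine keySM 384 (by norm_num) (ma0 * ma1 * ma1) (((3 : ℕ) : MvPolynomial (Fin 3) ℚ) * (ma0 ^ 3)) ?_ ?_
      · rw [show ((384 : ℕ) : MvPolynomial (Fin 3) ℚ) * (ma0 * ma1 * ma1) - (((3 : ℕ) : MvPolynomial (Fin 3) ℚ) * (ma0 ^ 3)) = (-(32 * ma0)) * (2 * ma1 * mb0 - ma1 * ma0) + (-(384 * ma1)) * (2 * ma1 * mb0 - ma1 * ma0) + (-(192 * mb0)) * (2 * ma1 * mb0 - ma1 * ma0) + (128 * ma1) * (3 * mb0 ^ 2 + 6 * ma1 * mb0 - ma0 * mb0) + (-1) * (3 * ma0 ^ 3 + 32 * ma1 * ma0 ^ 2) from by push_cast; ring]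
        exact Ideal.add_mem _ (Ideal.add_mem _ (Ideal.add_mem _ (Ideal.add_mem _ (Ideal.mul_mem_left _ (-(32 * ma0)) hJg1) (Ideal.mul_mem_left _ (-(384 * ma1)) hJg1)) (Ideal.mul_mem_left _ (-(192 * mb0)) hJg1)) (Ideal.mul_mem_left _ (128 * ma1) hJg0)) (Ideal.mul_mem_left _ (-1) hJg4)
      · exact mkm_nmul_mem 3 (ma0 ^ 3) hGG7
    · show mkm (ma0 ^ 2) * mkm ma1 ∈ SM
      rw [← map_mul]
      refine keySM 32 (by norm_num) (ma0 ^ 2 * ma1) (-(((3 : ℕ) : MvPolynomial (Fin 3) ℚ) * (ma0 ^ 3))) ?_ ?_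
      · rw [show ((32 : ℕ) : MvPolynomial (Fin 3) ℚ) * (ma0 ^ 2 * ma1) - (-(((3 : ℕ) : MvPolynomial (Fin 3) ℚ) * (ma0 ^ 3))) = (1) * (3 * ma0 ^ 3 + 32 * ma1 * ma0 ^ 2) from by push_cast; ring]
        exact Ideal.mul_mem_left _ (1) hJg4
      · exact mkm_neg_nmul_mem 3 (ma0 ^ 3) hGG7
    · show mkm (ma0 ^ 3) * mkm ma1 ∈ SM
      rw [← map_mul]
      refine keySM 1 (by norm_num) (ma0 ^ 3 * ma1) (0) ?_ ?_
      · rw [show ((1 : ℕ) : MvPolynomial (Fin 3) ℚ) * (ma0 ^ 3 * ma1) - (0) = (2 * ma1) * (ma0 ^ 2 * mb0) + (-(ma0 ^ 2)) * (2 * ma1 * mb0 - ma1 * ma0) from by push_cast; ring]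
        exact Ideal.add_mem _ (Ideal.mul_mem_left _ (2 * ma1) hJg3) (Ideal.mul_mem_left _ (-(ma0 ^ 2)) hJg1)
      · exact mkm_zero_mem
  | zero => rw [zero_mul]; exact SM.zero_mem
  | add a b ha hb iha ihb => rw [add_mul]; exact SM.add_mem iha ihb
  | smul a y hy ih => rw [smul_mul_assoc]; exact SM.smul_mem a ih

theorem closed_mb0 : ∀ x ∈ SM, x * mkm mb0 ∈ SM := by
  intro x hx
  induction hx using Submodule.span_induction with
  | mem y hy =>
    obtain ⟨j, rfl⟩ := hy
    fin_cases j
    · show mkm 1 * mkm mb0 ∈ SM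
      rw [← map_mul, one_mul]
      exact hGG1
    · show mkm (mb0) * mkm mb0 ∈ SM
      rw [← map_mul]
      refine keySM 3 (by norm_num) (mb0 * mb0) (ma0 * mb0 - ((3 : ℕ) : MvPolynomial (Fin 3) ℚ) * (ma0 * ma1)) ?_ ?_
      · rw [show ((3 : ℕ) : MvPolynomial (Fin 3) ℚ) * (mb0 * mb0) - (ma0 * mb0 - ((3 : ℕ) : MvPolynomial (Fin 3) ℚ) * (ma0 * ma1)) = (1) * (3 * mb0 ^ 2 + 6 * ma1 * mb0 - ma0 * mb0) + (-3) * (2 * ma1 * mb0 - ma1 * ma0) from by push_cast; ring]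
        exact Ideal.add_mem _ (Ideal.mul_mem_left _ (1) hJg0) (Ideal.mul_mem_left _ (-3) hJg1)
      · exact mkm_sub_mem _ _ hGG4 (mkm_nmul_mem 3 (ma0 * ma1) hGG5)
    · show mkm (ma1) * mkm mb0 ∈ SM
      rw [← map_mul]
      refine keySM 2 (by norm_num) (ma1 * mb0) (ma0 * ma1) ?_ ?_
      · rw [show ((2 : ℕ) : MvPolynomial (Fin 3) ℚ) * (ma1 * mb0) - (ma0 * ma1) = (1) * (2 * ma1 * mb0 - ma1 * ma0) from by push_cast; ring]
        exact Ideal.mul_mem_left _ (1) hJg1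
      · exact hGG5
    · show mkm (ma0) * mkm mb0 ∈ SM
      rw [← map_mul]
      rw [show (ma0 * mb0 : MvPolynomial (Fin 3) ℚ) = ma0 * mb0 from by ring]
      exact hGG4
    · show mkm (ma0 * mb0) * mkm mb0 ∈ SM
      rw [← map_mul]
      refine keySM 96 (by norm_num) (ma0 * mb0 * mb0) (((9 : ℕ) : MvPolynomial (Fin 3) ℚ) * (ma0 ^ 3)) ?_ ?_
      · rw [show ((96 : ℕ) : MvPolynomial (Fin 3) ℚ) * (ma0 * mb0 * mb0) - (((9 : ℕ) : MvPolynomial (Fin 3) ℚ) * (ma0 ^ 3)) = (32 * ma0) * (3 * mb0 ^ 2 + 6 * ma1 * mb0 - ma0 * mb0) + (-(96 * ma0)) * (2 * ma1 * mb0 - ma1 * ma0) + (32) * (ma0 ^ 2 * mb0) + (-3) * (3 * ma0 ^ 3 + 32 * ma1 * ma0 ^ 2) from by push_cast; ring]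
        exact Ideal.add_mem _ (Ideal.add_mem _ (Ideal.add_mem _ (Ideal.mul_mem_left _ (32 * ma0) hJg0) (Ideal.mul_mem_left _ (-(96 * ma0)) hJg1)) (Ideal.mul_mem_left _ (32) hJg3)) (Ideal.mul_mem_left _ (-3) hJg4)
      · exact mkm_nmul_mem 9 (ma0 ^ 3) hGG7
    · show mkm (ma0 * ma1) * mkm mb0 ∈ SM
      rw [← map_mul]
      refine keySM 64 (by norm_num) (ma0 * ma1 * mb0) (-(((3 : ℕ) : MvPolynomial (Fin 3) ℚ) * (ma0 ^ 3))) ?_ ?_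
      · rw [show ((64 : ℕ) : MvPolynomial (Fin 3) ℚ) * (ma0 * ma1 * mb0) - (-(((3 : ℕ) : MvPolynomial (Fin 3) ℚ) * (ma0 ^ 3))) = (32 * ma0) * (2 * ma1 * mb0 - ma1 * ma0) + (1) * (3 * ma0 ^ 3 + 32 * ma1 * ma0 ^ 2) from by push_cast; ring]
        exact Ideal.add_mem _ (Ideal.mul_mem_left _ (32 * ma0) hJg1) (Ideal.mul_mem_left _ (1) hJg4)
      · exact mkm_neg_nmul_mem 3 (ma0 ^ 3) hGG7
    · show mkm (ma0 ^ 2) * mkm mb0 ∈ SM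
      rw [← map_mul]
      refine keySM 1 (by norm_num) (ma0 ^ 2 * mb0) (0) ?_ ?_
      · rw [show ((1 : ℕ) : MvPolynomial (Fin 3) ℚ) * (ma0 ^ 2 * mb0) - (0) = (1) * (ma0 ^ 2 * mb0) from by push_cast; ring]
        exact Ideal.mul_mem_left _ (1) hJg3
      · exact mkm_zero_mem
    · show mkm (ma0 ^ 3) * mkm mb0 ∈ SM
      rw [← map_mul]
      refine keySM 1 (by norm_num) (ma0 ^ 3 * mb0) (0) ?_ ?_
      · rw [show ((1 : ℕ) : MvPolynomial (Fin 3) ℚ) * (ma0 ^ 3 * mb0) - (0) = (3 * mb0) * (ma0 ^ 2 * mb0) + (6 * ma1) * (ma0 ^ 2 * mb0) + (-(ma0 ^ 2)) * (3 * mb0 ^ 2 + 6 * ma1 * mb0 - ma0 * mb0) from by push_cast; ring]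
        exact Ideal.add_mem _ (Ideal.add_mem _ (Ideal.mul_mem_left _ (3 * mb0) hJg3) (Ideal.mul_mem_left _ (6 * ma1) hJg3)) (Ideal.mul_mem_left _ (-(ma0 ^ 2)) hJg0)
      · exact mkm_zero_mem
  | zero => rw [zero_mul]; exact SM.zero_mem
  | add a b ha hb iha ihb => rw [add_mul]; exact SM.add_mem iha ihb
  | smul a y hy ih => rw [smul_mul_assoc]; exact SM.smul_mem a ih

theorem spanGG : SM = ⊤ := by
  rw [Submodule.eq_top_iff']
  intro x
  obtain ⟨p, rfl⟩ := Ideal.Quotient.mkₐ_surjective ℚ Jminus x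
  show mkm p ∈ SM
  induction p using MvPolynomial.induction_on with
  | C q =>
    rw [show (C q : MvPolynomial (Fin 3) ℚ) = q • 1 from by
      rw [MvPolynomial.smul_eq_C_mul, mul_one], map_smul]
    exact SM.smul_mem q hGG0
  | add p q hp hq =>
    rw [map_add]
    exact SM.add_mem hp hq
  | mul_X p n hp =>
    rw [map_mul]
    fin_cases n
    · exact closed_ma0 _ hp
    · exact closed_ma1 _ hp
    · exact closed_mb0 _ hp

/-! ## The main theorem -/

theorem stmt8 :
    IsEmpty ((MvPolynomial (Fin 4) ℚ ⧸ Jplus) ≃ₐ[ℚ] (MvPolynomial (Fin 3) ℚ ⧸ Jminus)) := by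
  refine ⟨fun e => ?_⟩
  classical
  have hInd : LinearIndependent ℚ (⇑e.toLinearEquiv.toLinearMap ∘ FF) :=
    indepFF.map' e.toLinearEquiv.toLinearMap e.toLinearEquiv.ker
  have hcard := linearIndependent_le_span _ hInd (Set.range GG) spanGG
  have h8 : Fintype.card ↑(Set.range GG) ≤ 8 := by
    simpa using Fintype.card_range_le GG
  rw [Cardinal.mk_fintype, Fintype.card_fin] at hcard
  have h10 : (10 : ℕ) ≤ Fintype.card ↑(Set.range GG) := by exact_mod_cast hcard
  omega
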